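/- For every x ≥ d, e^{α·x}·[(g(x)−u₀)·ψ₂'(x) − (λ+δ)·ψ₂(x)] + α·λ·∫_d^x e^{α·y}·ψ₂(y) dy = e^{α·d}·[(g(d)−u₀)·ψ₂'(d) − (λ+δ)·ψ₂(d)]; equivalently, with h(x) := α·e^{−αx}·∫_d^x e^{αy}·ψ₂(y) dy, the function x ↦ e^{αx}·[(g(x)−u₀)·ψ₂'(x) − (λ+δ)·ψ₂(x) + λ·h(x)] is constant on [d, ∞). -/

import Mathlib

/-- For every x ≥ d,
e^{αx}[(g(x)−u₀)ψ₂'(x) − (λ+δ)ψ₂(x)] + αλ∫_d^x e^{αy}ψ₂(y)dy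
  = e^{αd}[(g(d)−u₀)ψ₂'(d) − (λ+δ)ψ₂(d)]; equivalently, with
h(x) = αe^{−αx}∫_d^x e^{αy}ψ₂(y)dy, the function
x ↦ e^{αx}[(g(x)−u₀)ψ₂'(x) − (λ+δ)ψ₂(x) + λh(x)] is constant on [d,∞). -/
theorem stmt_10 (lam del al u0 d : ℝ) (g g' ψ₂ ψ₂' ψ₂'' : ℝ → ℝ)
    (hlam : 0 < lam) (hdel : 0 < del) (hal : 0 < al) (hu0 : 0 < u0)
    (hg : ∀ x ≥ d, HasDerivAt g (g' x) x)
    (hg'c : ContinuousOn g' (Set.Ici d))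
    (hψ₂d : ∀ x ≥ d, HasDerivAt ψ₂ (ψ₂' x) x)
    (hψ₂d2 : ∀ x ≥ d, HasDerivAt ψ₂' (ψ₂'' x) x)
    (hψ₂''c : ContinuousOn ψ₂'' (Set.Ici d))
    (heq : ∀ x > d,
      (g x - u0) * ψ₂'' x + (al * (g x - u0) + g' x - (lam + del)) * ψ₂' x
        - al * del * ψ₂ x = 0) :
    ∀ x ≥ d,
      Real.exp (al * x) * ((g x - u0) * ψ₂' x - (lam + del) * ψ₂ x)
          + al * lam * ∫ y in d..x, Real.exp (al * y) * ψ₂ y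
        = Real.exp (al * d) * ((g d - u0) * ψ₂' d - (lam + del) * ψ₂ d) ∧
      Real.exp (al * x) * ((g x - u0) * ψ₂' x - (lam + del) * ψ₂ x
            + lam * (al * Real.exp (-al * x) * ∫ y in d..x, Real.exp (al * y) * ψ₂ y))
        = Real.exp (al * d) * ((g d - u0) * ψ₂' d - (lam + del) * ψ₂ d) := by
  -- continuity facts
  have hgc : ContinuousOn g (Set.Ici d) := fun x hx =>
    ((hg x hx).continuousAt).continuousWithinAt
  have hψc : ContinuousOn ψ₂ (Set.Ici d) := fun x hx =>
    ((hψ₂d x hx).continuousAt).continuousWithinAt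
  have hψ'c : ContinuousOn ψ₂' (Set.Ici d) := fun x hx =>
    ((hψ₂d2 x hx).continuousAt).continuousWithinAt
  set E : ℝ → ℝ := fun x =>
    (g x - u0) * ψ₂'' x + (al * (g x - u0) + g' x - (lam + del)) * ψ₂' x
      - al * del * ψ₂ x with hE
  have hEc : ContinuousOn E (Set.Ici d) := by
    apply ContinuousOn.sub
    · exact (((hgc.sub continuousOn_const).mul hψ₂''c).add
        ((((continuousOn_const.mul (hgc.sub continuousOn_const)).add hg'c).sub
          continuousOn_const).mul hψ'c))
    · exact continuousOn_const.mul hψc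
  have heq' : ∀ x ≥ d, E x = 0 := by
    intro x hx
    rcases eq_or_lt_of_le hx with h | h
    · rw [← h]
      have h1 : Filter.Tendsto E (nhdsWithin d (Set.Ioi d)) (nhds (E d)) :=
        ((hEc d Set.self_mem_Ici).mono Set.Ioi_subset_Ici_self)
      have h2 : Filter.Tendsto E (nhdsWithin d (Set.Ioi d)) (nhds 0) := by
        apply Filter.Tendsto.congr' _ tendsto_const_nhds
        filter_upwards [self_mem_nhdsWithin] with y hy
        exact (heq y hy).symm
      exact tendsto_nhds_unique h1 h2
    · exact heq x h
  set φ : ℝ → ℝ := fun y => Real.exp (al * y) * ψ₂ y with hφ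
  have hφc : ContinuousOn φ (Set.Ici d) :=
    ((Real.continuous_exp.comp (continuous_const.mul continuous_id)).continuousOn).mul hψc
  set F : ℝ → ℝ := fun u =>
    Real.exp (al * u) * ((g u - u0) * ψ₂' u - (lam + del) * ψ₂ u)
      + al * lam * ∫ y in d..u, φ y with hF
  -- F is constant on [d, b]
  have key : ∀ b ≥ d, F b = F d := by
    intro b hb
    have hint : MeasureTheory.IntegrableOn φ (Set.uIcc d b) := by
      apply ContinuousOn.integrableOn_compact isCompact_uIcc
      exact hφc.mono (by rw [Set.uIcc_of_le hb]; exact Set.Icc_subset_Ici_self)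
    have hFc : ContinuousOn F (Set.Icc d b) := by
      have hprim : ContinuousOn (fun u => ∫ y in d..u, φ y) (Set.Icc d b) := by
        have := intervalIntegral.continuousOn_primitive_interval hint
          
        rwa [Set.uIcc_of_le hb] at this
      have hsub : Set.Icc d b ⊆ Set.Ici d := Set.Icc_subset_Ici_self
      exact (((Real.continuous_exp.comp
          (continuous_const.mul continuous_id)).continuousOn).mul
          ((((hgc.mono hsub).sub continuousOn_const).mul (hψ'c.mono hsub)).sub
            (continuousOn_const.mul (hψc.mono hsub)))).add
        (continuousOn_const.mul hprim)
    have hderiv : ∀ x ∈ Set.Ico d b, HasDerivWithinAt F 0 (Set.Ici x) x := by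
      intro x hx
      have hxd : d ≤ x := hx.1
      have hintx : IntervalIntegrable φ MeasureTheory.volume d x := by
        apply ContinuousOn.intervalIntegrable
        exact hφc.mono (by rw [Set.uIcc_of_le hxd]; exact Set.Icc_subset_Ici_self)
      have hmeas : StronglyMeasurableAtFilter φ (nhdsWithin x (Set.Ioi x)) :=
        ⟨Set.Ici d, Filter.mem_of_superset self_mem_nhdsWithin
            ((Set.Ioi_subset_Ici_self).trans (Set.Ici_subset_Ici.mpr hxd)),
          hφc.aestronglyMeasurable measurableSet_Ici⟩
      have hI : HasDerivWithinAt (fun u => ∫ y in d..u, φ y) (φ x) (Set.Ici x) x :=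
        intervalIntegral.integral_hasDerivWithinAt_right hintx hmeas
          ((hφc x hxd).mono ((Set.Ioi_subset_Ici_self).trans (Set.Ici_subset_Ici.mpr hxd)))
      have hexp : HasDerivAt (fun u => Real.exp (al * u)) (Real.exp (al * x) * al) x := by
        simpa using ((hasDerivAt_id x).const_mul al).exp
      have hA : HasDerivAt (fun u => (g u - u0) * ψ₂' u - (lam + del) * ψ₂ u)
          (g' x * ψ₂' x + (g x - u0) * ψ₂'' x - (lam + del) * ψ₂' x) x := by
        exact (((hg x hxd).sub_const u0).mul (hψ₂d2 x hxd)).sub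
          ((hψ₂d x hxd).const_mul (lam + del))
      have := ((hexp.mul hA).hasDerivWithinAt.add
        ((hI.const_mul (al * lam))))
      refine this.congr_deriv ?_
      have hEx := heq' x hxd
      simp only [hE] at hEx
      simp only [φ]
      nlinarith [hEx, Real.exp_pos (al * x), sq_nonneg (Real.exp (al * x))]
    have := constant_of_has_deriv_right_zero hFc hderiv b (Set.right_mem_Icc.mpr hb)
    exact this
  intro x hx
  have h1 := key x hx
  simp only [hF] at h1
  have h2 : (∫ y in d..d, φ y) = 0 := intervalIntegral.integral_same
  rw [h2] at h1
  have h1' : Real.exp (al * x) * ((g x - u0) * ψ₂' x - (lam + del) * ψ₂ x)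
      + al * lam * ∫ y in d..x, Real.exp (al * y) * ψ₂ y
      = Real.exp (al * d) * ((g d - u0) * ψ₂' d - (lam + del) * ψ₂ d) := by
    simpa [hφ] using h1
  refine ⟨h1', ?_⟩
  have hxx : Real.exp (al * x) * Real.exp (-al * x) = 1 := by
    rw [← Real.exp_add]; ring_nf; exact Real.exp_zero
  linear_combination h1' + lam * al * (∫ y in d..x, Real.exp (al * y) * ψ₂ y) * hxx
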